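/- arXiv:2008.11627 — 3 statements merged into one kernel-verified Lean document; each statement's English description precedes it below -/
import Mathlib

section
/- For all l with 1 < l < 2 there exists a constant C_l > 0 such that for all a, b ∈ ℝ^N with |a| + |b| > 0, |a−b|^l ≤ C_l · ((|a|^{l−2}a − |b|^{l−2}b)·(a−b))^{l/2} · (|a|^l + |b|^l)^{(2−l)/2}. -/
open Real intervalIntegral
open scoped NNReal

-- splitting rpow
lemma my_rpow_succ {l : ℝ} (hl : l ≠ 0) {s : ℝ} (hs : 0 ≤ s) :
    s ^ (l - 1) * s = s ^ l := by
  rcases hs.eq_or_lt with h | h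
  · rw [← h]
    simp [Real.zero_rpow hl]
  · rw [← Real.rpow_add_one h.ne' (l - 1)]; ring_nf

lemma E1 {l : ℝ} (hl1 : 1 < l) (hl2 : l < 2) {s t : ℝ} (ht : 0 ≤ t) (hts : t ≤ s) :
    (l - 1) * (s + t) ^ (l - 2) * (s - t) ≤ s ^ (l - 1) - t ^ (l - 1) := by
  have hs : 0 ≤ s := le_trans ht hts
  rcases ht.eq_or_lt with h0 | h0
  · -- t = 0
    have hl1' : l - 1 ≠ 0 := by intro h; nlinarith [sub_eq_zero.mp h]
    rw [← h0]
    rw [Real.zero_rpow hl1']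
    simp only [add_zero, sub_zero]
    have hss : s ^ (l - 2) * s = s ^ (l - 1) := by
      have h2 := my_rpow_succ (l := l - 1) hl1' hs
      rw [show l - 1 - 1 = l - 2 by ring] at h2
      exact h2
    calc (l - 1) * s ^ (l - 2) * s = (l - 1) * (s ^ (l - 2) * s) := by ring
      _ = (l - 1) * s ^ (l - 1) := by rw [hss]
      _ ≤ 1 * s ^ (l - 1) := by
          apply mul_le_mul_of_nonneg_right (by linarith) (Real.rpow_nonneg hs _)
      _ = s ^ (l - 1) := one_mul _
  · -- 0 < t
    have hkey : ∫ u in t..s, u ^ (l - 2) = (s ^ (l - 1) - t ^ (l - 1)) / (l - 1) := by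
      rw [integral_rpow (Or.inl (by linarith))]
      rw [show l - 2 + 1 = l - 1 by ring]
    have hint : IntervalIntegrable (fun u : ℝ => u ^ (l - 2)) MeasureTheory.volume t s :=
      intervalIntegrable_rpow (Or.inr (by
        rw [Set.uIcc_of_le hts]
        intro hmem
        exact absurd hmem.1 (by linarith)))
    have hmono : ∫ _u in t..s, (s + t) ^ (l - 2) ≤ ∫ u in t..s, u ^ (l - 2) := by
      apply integral_mono_on hts intervalIntegrable_const hint
      intro x hx
      exact Real.rpow_le_rpow_of_nonpos (lt_of_lt_of_le h0 hx.1) (by nlinarith [hx.2]) (by linarith)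
    rw [integral_const, smul_eq_mul, hkey] at hmono
    have hl1pos : (0:ℝ) < l - 1 := by linarith
    rw [le_div_iff₀ hl1pos] at hmono
    nlinarith [hmono]

lemma superadd {q : ℝ} (hq0 : 0 ≤ q) (hq1 : q ≤ 1) {s t : ℝ} (hs : 0 ≤ s) (ht : 0 ≤ t) :
    (s + t) ^ q ≤ s ^ q + t ^ q := by
  have h := NNReal.rpow_add_le_add_rpow (s.toNNReal) (t.toNNReal) hq0 hq1
  have h2 : ((s.toNNReal + t.toNNReal : ℝ≥0) : ℝ) ^ q ≤
      ((s.toNNReal : ℝ)) ^ q + ((t.toNNReal : ℝ)) ^ q := by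
    rw [← NNReal.coe_rpow, ← NNReal.coe_rpow, ← NNReal.coe_rpow, ← NNReal.coe_add]
    exact_mod_cast h
  rwa [NNReal.coe_add, Real.coe_toNNReal s hs, Real.coe_toNNReal t ht] at h2

lemma key_scalar {l : ℝ} (hl1 : 1 < l) (hl2 : l < 2) {s t c : ℝ} (hs : 0 ≤ s) (ht : 0 ≤ t)
    (hc : |c| ≤ s * t) :
    (l - 1) * (s + t) ^ (l - 2) * (s * s + t * t - 2 * c) ≤
      s ^ l + t ^ l - (s ^ (l - 2) + t ^ (l - 2)) * c := by
  have hl0 : l ≠ 0 := by linarith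
  have hl1' : l - 1 ≠ 0 := by intro h; nlinarith [sub_eq_zero.mp h]
  have hsplit : ∀ x : ℝ, 0 ≤ x → x ^ (l - 2) * x = x ^ (l - 1) := by
    intro x hx
    have h2 := my_rpow_succ (l := l - 1) hl1' hx
    rwa [show l - 1 - 1 = l - 2 by ring] at h2
  have hsplit' : ∀ x : ℝ, 0 ≤ x → x ^ (l - 1) * x = x ^ l := fun x hx => my_rpow_succ hl0 hx
  set K := (l - 1) * (s + t) ^ (l - 2) with hK
  have hKnn : 0 ≤ K := mul_nonneg (by linarith) (Real.rpow_nonneg (by linarith) _)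
  -- endpoint 1 : c = s*t
  have e1 : K * ((s - t) * (s - t)) ≤ s ^ l + t ^ l - (s ^ (l - 2) + t ^ (l - 2)) * (s * t) := by
    have hRHS : s ^ l + t ^ l - (s ^ (l - 2) + t ^ (l - 2)) * (s * t) =
        (s - t) * (s ^ (l - 1) - t ^ (l - 1)) := by
      have h1 := hsplit s hs
      have h2 := hsplit t ht
      have h3 := hsplit' s hs
      have h4 := hsplit' t ht
      nlinarith [h1, h2, h3, h4]
    rw [hRHS]
    rcases le_total t s with h | h
    · have := E1 hl1 hl2 ht h
      nlinarith [this, sub_nonneg.mpr h]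
    · have h5 := E1 hl1 hl2 hs h
      rw [show t + s = s + t by ring] at h5
      nlinarith [h5, sub_nonneg.mpr h]
  -- endpoint 2 : c = -(s*t)
  have e2 : K * ((s + t) * (s + t)) ≤ s ^ l + t ^ l + (s ^ (l - 2) + t ^ (l - 2)) * (s * t) := by
    have hRHS : s ^ l + t ^ l + (s ^ (l - 2) + t ^ (l - 2)) * (s * t) =
        (s + t) * (s ^ (l - 1) + t ^ (l - 1)) := by
      have h1 := hsplit s hs
      have h2 := hsplit t ht
      have h3 := hsplit' s hs
      have h4 := hsplit' t ht
      nlinarith [h1, h2, h3, h4]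
    rw [hRHS]
    have hst : 0 ≤ s + t := by linarith
    have hL : K * ((s + t) * (s + t)) = (l - 1) * ((s + t) ^ (l - 1) * (s + t)) := by
      have h6 := hsplit (s + t) hst
      rw [hK]
      linear_combination ((l - 1) * (s + t)) * h6
    rw [hL]
    have hsup : (s + t) ^ (l - 1) ≤ s ^ (l - 1) + t ^ (l - 1) :=
      superadd (by linarith) (by linarith) hs ht
    have hpnn : 0 ≤ (s + t) ^ (l - 1) := Real.rpow_nonneg hst _
    nlinarith [mul_le_mul_of_nonneg_right hsup hst,
      mul_nonneg (by linarith : (0:ℝ) ≤ 2 - l) (mul_nonneg hpnn hst)]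
  -- combine
  obtain ⟨hc2, hc1⟩ := abs_le.mp hc
  rcases (mul_nonneg hs ht).eq_or_lt with h0 | h0
  · have hc0 : c = 0 := le_antisymm (by linarith) (by linarith)
    rw [hc0]
    nlinarith [e1, h0]
  · nlinarith [mul_nonneg (by linarith : (0:ℝ) ≤ s * t + c) (sub_nonneg.mpr e1),
      mul_nonneg (by linarith : (0:ℝ) ≤ s * t - c) (sub_nonneg.mpr e2), h0]

lemma key_vec {N : ℕ} {l : ℝ} (hl1 : 1 < l) (hl2 : l < 2) (a b : EuclideanSpace ℝ (Fin N)) :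
    (l - 1) * (‖a‖ + ‖b‖) ^ (l - 2) * ‖a - b‖ ^ (2 : ℕ) ≤
      (inner ℝ (‖a‖ ^ (l - 2) • a - ‖b‖ ^ (l - 2) • b) (a - b) : ℝ) := by
  have hD : (inner ℝ (‖a‖ ^ (l - 2) • a - ‖b‖ ^ (l - 2) • b) (a - b) : ℝ) =
      ‖a‖ ^ l + ‖b‖ ^ l - (‖a‖ ^ (l - 2) + ‖b‖ ^ (l - 2)) * (inner ℝ a b : ℝ) := by
    rw [inner_sub_left, inner_sub_right, inner_sub_right, real_inner_smul_left,
      real_inner_smul_left, real_inner_smul_left, real_inner_smul_left,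
      real_inner_self_eq_norm_sq, real_inner_self_eq_norm_sq, real_inner_comm b a]
    have hsa : ‖a‖ ^ (l - 2) * ‖a‖ ^ (2:ℕ) = ‖a‖ ^ l := by
      rcases (norm_nonneg a).eq_or_lt with h | h
      · rw [← h, Real.zero_rpow (by intro h'; nlinarith [sub_eq_zero.mp h'] : l - 2 ≠ 0),
          Real.zero_rpow (by linarith : l ≠ 0)]
        ring
      · rw [← Real.rpow_natCast ‖a‖ 2, ← Real.rpow_add h]
        norm_num
    have hsb : ‖b‖ ^ (l - 2) * ‖b‖ ^ (2:ℕ) = ‖b‖ ^ l := by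
      rcases (norm_nonneg b).eq_or_lt with h | h
      · rw [← h, Real.zero_rpow (by intro h'; nlinarith [sub_eq_zero.mp h'] : l - 2 ≠ 0),
          Real.zero_rpow (by linarith : l ≠ 0)]
        ring
      · rw [← Real.rpow_natCast ‖b‖ 2, ← Real.rpow_add h]
        norm_num
    rw [← hsa, ← hsb]
    ring
  have hnorm : ‖a - b‖ ^ (2:ℕ) = ‖a‖ * ‖a‖ + ‖b‖ * ‖b‖ - 2 * (inner ℝ a b : ℝ) := by
    rw [norm_sub_sq_real]
    ring
  rw [hD, hnorm]
  exact key_scalar hl1 hl2 (norm_nonneg a) (norm_nonneg b) (abs_real_inner_le_norm a b)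

theorem stmt_5 (N : ℕ) (hN : 0 < N) (l : ℝ) (hl1 : 1 < l) (hl2 : l < 2) :
    ∃ C : ℝ, 0 < C ∧ ∀ a b : EuclideanSpace ℝ (Fin N), 0 < ‖a‖ + ‖b‖ →
      ‖a - b‖ ^ l ≤ C *
        ((inner ℝ (‖a‖ ^ (l - 2) • a - ‖b‖ ^ (l - 2) • b) (a - b) : ℝ)) ^ (l / 2) *
        (‖a‖ ^ l + ‖b‖ ^ l) ^ ((2 - l) / 2) := by
  have hl1pos : (0:ℝ) < l - 1 := by linarith
  refine ⟨(l - 1) ^ (-(l / 2)) * 2 ^ (l * ((2 - l) / 2)), ?_, ?_⟩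
  · exact mul_pos (Real.rpow_pos_of_pos hl1pos _) (Real.rpow_pos_of_pos two_pos _)
  intro a b hab
  set S := ‖a‖ + ‖b‖ with hS
  set X := ‖a - b‖ with hX
  set D : ℝ := (inner ℝ (‖a‖ ^ (l - 2) • a - ‖b‖ ^ (l - 2) • b) (a - b) : ℝ) with hD
  set K : ℝ := (l - 1) * S ^ (l - 2) with hKdef
  have hKpos : 0 < K := mul_pos hl1pos (Real.rpow_pos_of_pos hab _)
  have hXnn : 0 ≤ X := norm_nonneg _
  have hkey : K * X ^ (2:ℕ) ≤ D := key_vec hl1 hl2 a b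
  have hKXnn : 0 ≤ K * X ^ (2:ℕ) := mul_nonneg hKpos.le (by positivity)
  -- lower bound D^(l/2)
  have h1 : K ^ (l / 2) * X ^ l ≤ D ^ (l / 2) := by
    have := Real.rpow_le_rpow hKXnn hkey (by linarith : 0 ≤ l / 2)
    rwa [Real.mul_rpow hKpos.le (by positivity), ← Real.rpow_natCast_mul hXnn 2 (l / 2),
      show ((2:ℕ):ℝ) * (l / 2) = l by push_cast; ring] at this
  -- lower bound sum^((2-l)/2)
  have h2 : S ^ l ≤ 2 ^ l * (‖a‖ ^ l + ‖b‖ ^ l) := by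
    have hmax : S ≤ 2 * max ‖a‖ ‖b‖ := by
      rcases le_total ‖a‖ ‖b‖ with h | h
      · rw [max_eq_right h, hS]; linarith
      · rw [max_eq_left h, hS]; linarith
    have hm1 : S ^ l ≤ (2 * max ‖a‖ ‖b‖) ^ l :=
      Real.rpow_le_rpow hab.le hmax (by linarith)
    have hm2 : (2 * max ‖a‖ ‖b‖) ^ l = 2 ^ l * (max ‖a‖ ‖b‖) ^ l :=
      Real.mul_rpow (by norm_num) (le_max_of_le_left (norm_nonneg a))
    have hm3 : (max ‖a‖ ‖b‖) ^ l ≤ ‖a‖ ^ l + ‖b‖ ^ l := by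
      rcases le_total ‖a‖ ‖b‖ with h | h
      · rw [max_eq_right h]
        nlinarith [Real.rpow_nonneg (norm_nonneg a) l]
      · rw [max_eq_left h]
        nlinarith [Real.rpow_nonneg (norm_nonneg b) l]
    calc S ^ l ≤ 2 ^ l * (max ‖a‖ ‖b‖) ^ l := by rw [← hm2]; exact hm1
      _ ≤ 2 ^ l * (‖a‖ ^ l + ‖b‖ ^ l) := by
          apply mul_le_mul_of_nonneg_left hm3 (by positivity)
  have h2' : 2 ^ (-l) * S ^ l ≤ ‖a‖ ^ l + ‖b‖ ^ l := by
    have h2l : (0:ℝ) < 2 ^ l := Real.rpow_pos_of_pos two_pos l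
    rw [Real.rpow_neg (by norm_num)]
    rw [inv_mul_le_iff₀ h2l] at *
    linarith [h2]
  have h3 : (2:ℝ) ^ (-l * ((2 - l) / 2)) * S ^ (l * ((2 - l) / 2)) ≤
      (‖a‖ ^ l + ‖b‖ ^ l) ^ ((2 - l) / 2) := by
    have hnn : 0 ≤ 2 ^ (-l) * S ^ l :=
      mul_nonneg (Real.rpow_nonneg (by norm_num) _) (Real.rpow_nonneg hab.le _)
    have := Real.rpow_le_rpow hnn h2' (by linarith : 0 ≤ (2 - l) / 2)
    rwa [Real.mul_rpow (Real.rpow_nonneg (by norm_num) _) (Real.rpow_nonneg hab.le _),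
      ← Real.rpow_mul (by norm_num : (0:ℝ) ≤ 2), ← Real.rpow_mul hab.le] at this
  -- combine
  have hDnn : 0 ≤ D ^ (l / 2) := Real.rpow_nonneg (le_trans hKXnn hkey) _
  have hKS : K ^ (l / 2) = (l - 1) ^ (l / 2) * S ^ ((l - 2) * (l / 2)) := by
    rw [hKdef, Real.mul_rpow hl1pos.le (Real.rpow_nonneg hab.le _),
      ← Real.rpow_mul hab.le]
  have hprod : (K ^ (l / 2) * X ^ l) * ((2:ℝ) ^ (-l * ((2 - l) / 2)) * S ^ (l * ((2 - l) / 2)))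
      = (l - 1) ^ (l / 2) * 2 ^ (-l * ((2 - l) / 2)) * X ^ l := by
    rw [hKS]
    have hSS : S ^ ((l - 2) * (l / 2)) * S ^ (l * ((2 - l) / 2)) = 1 := by
      rw [← Real.rpow_add hab, show (l - 2) * (l / 2) + l * ((2 - l) / 2) = 0 by ring,
        Real.rpow_zero]
    calc (l - 1) ^ (l / 2) * S ^ ((l - 2) * (l / 2)) * X ^ l *
          ((2:ℝ) ^ (-l * ((2 - l) / 2)) * S ^ (l * ((2 - l) / 2)))
        = (l - 1) ^ (l / 2) * 2 ^ (-l * ((2 - l) / 2)) * X ^ l *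
          (S ^ ((l - 2) * (l / 2)) * S ^ (l * ((2 - l) / 2))) := by ring
      _ = (l - 1) ^ (l / 2) * 2 ^ (-l * ((2 - l) / 2)) * X ^ l := by rw [hSS]; ring
  have hmul : (K ^ (l / 2) * X ^ l) * ((2:ℝ) ^ (-l * ((2 - l) / 2)) * S ^ (l * ((2 - l) / 2)))
      ≤ D ^ (l / 2) * (‖a‖ ^ l + ‖b‖ ^ l) ^ ((2 - l) / 2) := by
    apply mul_le_mul h1 h3 (mul_nonneg (Real.rpow_nonneg (by norm_num) _)
      (Real.rpow_nonneg hab.le _)) hDnn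
  rw [hprod] at hmul
  have hCinv : (l - 1) ^ (-(l / 2)) * 2 ^ (l * ((2 - l) / 2)) *
      ((l - 1) ^ (l / 2) * 2 ^ (-l * ((2 - l) / 2))) = 1 := by
    rw [show (-l * ((2 - l) / 2)) = -(l * ((2 - l) / 2)) by ring]
    rw [Real.rpow_neg hl1pos.le, Real.rpow_neg (by norm_num : (0:ℝ) ≤ 2)]
    field_simp
  have hCpos : (0:ℝ) < (l - 1) ^ (-(l / 2)) * 2 ^ (l * ((2 - l) / 2)) :=
    mul_pos (Real.rpow_pos_of_pos hl1pos _) (Real.rpow_pos_of_pos two_pos _)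
  calc X ^ l = 1 * X ^ l := (one_mul _).symm
    _ = ((l - 1) ^ (-(l / 2)) * 2 ^ (l * ((2 - l) / 2)) *
        ((l - 1) ^ (l / 2) * 2 ^ (-l * ((2 - l) / 2)))) * X ^ l := by rw [hCinv]
    _ = ((l - 1) ^ (-(l / 2)) * 2 ^ (l * ((2 - l) / 2))) *
        ((l - 1) ^ (l / 2) * 2 ^ (-l * ((2 - l) / 2)) * X ^ l) := by ring
    _ ≤ ((l - 1) ^ (-(l / 2)) * 2 ^ (l * ((2 - l) / 2))) *
        (D ^ (l / 2) * (‖a‖ ^ l + ‖b‖ ^ l) ^ ((2 - l) / 2)) := by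
        apply mul_le_mul_of_nonneg_left hmul hCpos.le
    _ = (l - 1) ^ (-(l / 2)) * 2 ^ (l * ((2 - l) / 2)) * D ^ (l / 2) *
        (‖a‖ ^ l + ‖b‖ ^ l) ^ ((2 - l) / 2) := by ring
end

section
/- Let σ > 1 and let M : [t₀, T) → ℝ be twice continuously differentiable with M(t₀) > 0, M'(t₀) > 0, and M''(t)·M(t) ≥ σ·M'(t)² for all t ∈ [t₀, T). Then T ≤ t₀ + M(t₀)/((σ−1)·M'(t₀)); equivalently, if T > t₀ + M(t₀)/((σ−1)M'(t₀)) then M(t) → ∞ as t approaches t₀ + M(t₀)/((σ−1)M'(t₀)) from below. -/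
theorem stmt_6 (σ t₀ T : ℝ) (hσ : 1 < σ) (ht : t₀ < T)
    (M M' M'' : ℝ → ℝ)
    (hM : ∀ t ∈ Set.Ico t₀ T, HasDerivAt M (M' t) t)
    (hM' : ∀ t ∈ Set.Ico t₀ T, HasDerivAt M' (M'' t) t)
    (hM''cont : ContinuousOn M'' (Set.Ico t₀ T))
    (hM0 : 0 < M t₀) (hM'0 : 0 < M' t₀)
    (hineq : ∀ t ∈ Set.Ico t₀ T, σ * (M' t) ^ 2 ≤ M'' t * M t) :
    T ≤ t₀ + M t₀ / ((σ - 1) * M' t₀) := by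
  have hσ1 : (0:ℝ) < σ - 1 := by linarith
  have hc : 0 < M t₀ / ((σ - 1) * M' t₀) := div_pos hM0 (mul_pos hσ1 hM'0)
  -- key: if M is positive on [t₀, u), then M t₀ ≤ M u and M' t₀ ≤ M' u
  have key : ∀ u, t₀ < u → u < T → (∀ s ∈ Set.Ico t₀ u, 0 < M s) →
      M t₀ ≤ M u ∧ M' t₀ ≤ M' u := by
    intro u htu huT hpos
    have hsub : Set.Icc t₀ u ⊆ Set.Ico t₀ T :=
      fun s hs => ⟨hs.1, lt_of_le_of_lt hs.2 huT⟩
    have hM'mono : MonotoneOn M' (Set.Icc t₀ u) := by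
      apply monotoneOn_of_deriv_nonneg (convex_Icc t₀ u)
      · exact fun s hs => (hM' s (hsub hs)).continuousAt.continuousWithinAt
      · rw [interior_Icc]
        exact fun s hs =>
          (hM' s (hsub (Set.Ioo_subset_Icc_self hs))).differentiableAt.differentiableWithinAt
      · rw [interior_Icc]
        intro s hs
        have hsm : s ∈ Set.Ico t₀ T := hsub (Set.Ioo_subset_Icc_self hs)
        rw [(hM' s hsm).deriv]
        have h1 := hineq s hsm
        have h2 := hpos s ⟨hs.1.le, hs.2⟩
        nlinarith [sq_nonneg (M' s)]
    have hM'ge : ∀ s ∈ Set.Icc t₀ u, M' t₀ ≤ M' s :=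
      fun s hs => hM'mono ⟨le_refl _, htu.le⟩ hs hs.1
    have hMmono : MonotoneOn M (Set.Icc t₀ u) := by
      apply monotoneOn_of_deriv_nonneg (convex_Icc t₀ u)
      · exact fun s hs => (hM s (hsub hs)).continuousAt.continuousWithinAt
      · rw [interior_Icc]
        exact fun s hs =>
          (hM s (hsub (Set.Ioo_subset_Icc_self hs))).differentiableAt.differentiableWithinAt
      · rw [interior_Icc]
        intro s hs
        rw [(hM s (hsub (Set.Ioo_subset_Icc_self hs))).deriv]
        have := hM'ge s (Set.Ioo_subset_Icc_self hs)
        linarith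
    exact ⟨hMmono ⟨le_refl _, htu.le⟩ ⟨htu.le, le_refl _⟩ htu.le, hM'ge u ⟨htu.le, le_refl _⟩⟩
  -- positivity of M on [t₀, T)
  have hMpos : ∀ t ∈ Set.Ico t₀ T, 0 < M t := by
    intro t htT
    by_contra hcon
    push_neg at hcon
    set S := {s ∈ Set.Icc t₀ t | M s ≤ 0} with hS
    have hsub : Set.Icc t₀ t ⊆ Set.Ico t₀ T :=
      fun s hs => ⟨hs.1, lt_of_le_of_lt hs.2 htT.2⟩
    have hScl : IsClosed S := by
      apply ContinuousOn.preimage_isClosed_of_isClosed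
        (fun s hs => (hM s (hsub hs)).continuousAt.continuousWithinAt) isClosed_Icc isClosed_Iic
    have hSne : S.Nonempty := ⟨t, ⟨⟨htT.1, le_refl _⟩, hcon⟩⟩
    have hSbdd : BddBelow S := ⟨t₀, fun s hs => hs.1.1⟩
    set u := sInf S with hu
    have huS : u ∈ S := hScl.csInf_mem hSne hSbdd
    have htu : t₀ < u := by
      rcases lt_or_eq_of_le huS.1.1 with h | h
      · exact h
      · exact absurd (h ▸ huS.2) (not_le.2 hM0)
    have hpos : ∀ s ∈ Set.Ico t₀ u, 0 < M s := by
      intro s hs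
      by_contra hscon
      push_neg at hscon
      have : s ∈ S := ⟨⟨hs.1, hs.2.le.trans huS.1.2⟩, hscon⟩
      exact absurd (csInf_le hSbdd this) (not_le.2 hs.2)
    have := (key u htu (lt_of_le_of_lt huS.1.2 htT.2) hpos).1
    linarith [huS.2]
  -- M' and M positive bounds on [t₀, T)
  have hboth : ∀ t ∈ Set.Ico t₀ T, M t₀ ≤ M t ∧ M' t₀ ≤ M' t := by
    intro t htT
    rcases eq_or_lt_of_le htT.1 with h | h
    · exact h ▸ ⟨le_refl _, le_refl _⟩
    · exact key t h htT.2 (fun s hs => hMpos s ⟨hs.1, hs.2.trans htT.2⟩)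
  -- the auxiliary concave function J = M ^ (1 - σ)
  set J : ℝ → ℝ := fun s => M s ^ (1 - σ) with hJdef
  set J' : ℝ → ℝ := fun s => M' s * (1 - σ) * M s ^ (-σ) with hJ'def
  have hJd : ∀ s ∈ Set.Ico t₀ T, HasDerivAt J (J' s) s := by
    intro s hs
    have h := (hM s hs).rpow_const (p := 1 - σ) (Or.inl (hMpos s hs).ne')
    have he : (1 - σ) - 1 = -σ := by ring
    rw [he] at h
    exact h
  have hJ't₀ : J' t₀ < 0 := by
    have hr : (0:ℝ) < M t₀ ^ (-σ) := Real.rpow_pos_of_pos hM0 _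
    have : M' t₀ * (1 - σ) < 0 := mul_neg_of_pos_of_neg hM'0 (by linarith)
    calc J' t₀ = M' t₀ * (1 - σ) * M t₀ ^ (-σ) := rfl
    _ < 0 := mul_neg_of_neg_of_pos this hr
  -- per-point bound
  have bound : ∀ t ∈ Set.Ico t₀ T, t < t₀ + M t₀ / ((σ - 1) * M' t₀) := by
    intro t htT
    have hsub : Set.Icc t₀ t ⊆ Set.Ico t₀ T :=
      fun s hs => ⟨hs.1, lt_of_le_of_lt hs.2 htT.2⟩
    -- derivative of J'
    have hJ'd : ∀ s ∈ Set.Ico t₀ T,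
        HasDerivAt J' (M'' s * (1 - σ) * M s ^ (-σ)
          + (M' s * (1 - σ)) * (M' s * (-σ) * M s ^ (-σ - 1))) s := by
      intro s hs
      exact ((hM' s hs).mul_const (1 - σ)).mul
        ((hM s hs).rpow_const (p := -σ) (Or.inl (hMpos s hs).ne'))
    have hJ'nonpos : ∀ s ∈ Set.Ico t₀ T,
        M'' s * (1 - σ) * M s ^ (-σ)
          + (M' s * (1 - σ)) * (M' s * (-σ) * M s ^ (-σ - 1)) ≤ 0 := by
      intro s hs
      have hMp := hMpos s hs
      have hpow : M s ^ (-σ) = M s ^ (-σ - 1) * M s := by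
        rw [← Real.rpow_add_one hMp.ne' (-σ - 1)]
        ring_nf
      have hrp : (0:ℝ) < M s ^ (-σ - 1) := Real.rpow_pos_of_pos hMp _
      have h1 := hineq s hs
      have heq : M'' s * (1 - σ) * M s ^ (-σ)
          + (M' s * (1 - σ)) * (M' s * (-σ) * M s ^ (-σ - 1))
          = (1 - σ) * M s ^ (-σ - 1) * (M'' s * M s - σ * (M' s) ^ 2) := by
        rw [hpow]; ring
      rw [heq]
      apply mul_nonpos_of_nonpos_of_nonneg
      · apply mul_nonpos_of_nonpos_of_nonneg (by linarith) hrp.le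
      · linarith
    -- J' is antitone on [t₀, t]
    have hJ'anti : AntitoneOn J' (Set.Icc t₀ t) := by
      apply antitoneOn_of_deriv_nonpos (convex_Icc t₀ t)
      · exact fun s hs => (hJ'd s (hsub hs)).continuousAt.continuousWithinAt
      · rw [interior_Icc]
        exact fun s hs =>
          (hJ'd s (hsub (Set.Ioo_subset_Icc_self hs))).differentiableAt.differentiableWithinAt
      · rw [interior_Icc]
        intro s hs
        have hsm := hsub (Set.Ioo_subset_Icc_self hs)
        rw [(hJ'd s hsm).deriv]
        exact hJ'nonpos s hsm
    -- K = J' t₀ * s - J s is monotone on [t₀, t]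
    have hKmono : MonotoneOn (fun s => J' t₀ * s - J s) (Set.Icc t₀ t) := by
      apply monotoneOn_of_deriv_nonneg (convex_Icc t₀ t)
      · intro s hs
        exact (((hasDerivAt_id s).const_mul (J' t₀)).sub
          (hJd s (hsub hs))).continuousAt.continuousWithinAt
      · rw [interior_Icc]
        intro s hs
        exact (((hasDerivAt_id s).const_mul (J' t₀)).sub
          (hJd s (hsub (Set.Ioo_subset_Icc_self hs)))).differentiableAt.differentiableWithinAt
      · rw [interior_Icc]
        intro s hs
        have hsm := hsub (Set.Ioo_subset_Icc_self hs)
        have hKd : HasDerivAt (fun s => J' t₀ * s - J s) (J' t₀ - J' s) s := by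
          have h := ((hasDerivAt_id s).const_mul (J' t₀)).sub (hJd s hsm)
          simp only [mul_one] at h
          exact h
        rw [hKd.deriv]
        have := hJ'anti (Set.left_mem_Icc.2 (htT.1)) (Set.Ioo_subset_Icc_self hs) hs.1.le
        linarith
    have hK := hKmono (Set.left_mem_Icc.2 htT.1) ⟨htT.1, le_refl _⟩ htT.1
    -- J t ≤ J t₀ + J' t₀ * (t - t₀), and J t > 0
    have hJt : 0 < J t := Real.rpow_pos_of_pos (hMpos t htT) _
    have hmain : 0 < J t₀ + J' t₀ * (t - t₀) := by
      simp only at hK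
      nlinarith
    -- unfold J and J'
    have hx : M t₀ ^ (1 - σ) = M t₀ ^ (-σ) * M t₀ := by
      rw [← Real.rpow_add_one hM0.ne' (-σ)]
      ring_nf
    have hrp : (0:ℝ) < M t₀ ^ (-σ) := Real.rpow_pos_of_pos hM0 _
    have hmain2 : (σ - 1) * M' t₀ * (t - t₀) * (M t₀ ^ (-σ)) < M t₀ * (M t₀ ^ (-σ)) := by
      have hJe : J t₀ = M t₀ ^ (-σ) * M t₀ := hx
      have hJ'e : J' t₀ = M' t₀ * (1 - σ) * M t₀ ^ (-σ) := rfl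
      rw [hJe, hJ'e] at hmain
      nlinarith [hmain]
    have hmain3 : (σ - 1) * M' t₀ * (t - t₀) < M t₀ := lt_of_mul_lt_mul_right hmain2 hrp.le
    have : t - t₀ < M t₀ / ((σ - 1) * M' t₀) := by
      rw [lt_div_iff₀ (mul_pos hσ1 hM'0)]
      linarith
    linarith
  refine le_of_forall_lt fun a haT => ?_
  rcases lt_or_ge a t₀ with h | h
  · linarith
  · exact bound a ⟨h, haT⟩
end

section
/- Let r > 2 and C > 0, and let M : [t₀, T) → ℝ be twice continuously differentiable with M'(t₀) > 0 and M''(t) ≥ C·(M'(t))^{r/2} for all t ∈ [t₀, T). Then T ≤ t₀ + 2·M'(t₀)^{1−r/2}/(C·(r−2)). -/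
theorem stmt_7 (r C t₀ T : ℝ) (hr : 2 < r) (hC : 0 < C) (ht : t₀ < T)
    (M M' M'' : ℝ → ℝ)
    (hM : ∀ t ∈ Set.Ico t₀ T, HasDerivAt M (M' t) t)
    (hM' : ∀ t ∈ Set.Ico t₀ T, HasDerivAt M' (M'' t) t)
    (hM''cont : ContinuousOn M'' (Set.Ico t₀ T))
    (hM'0 : 0 < M' t₀)
    (hineq : ∀ t ∈ Set.Ico t₀ T, C * (M' t) ^ (r / 2) ≤ M'' t) :
    T ≤ t₀ + 2 * (M' t₀) ^ (1 - r / 2) / (C * (r - 2)) := by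
  by_contra hT
  push_neg at hT
  set c : ℝ := 1 - r / 2 with hc
  have hcneg : c < 0 := by rw [hc]; linarith
  have hCr : 0 < C * (r - 2) := mul_pos hC (by linarith)
  set B : ℝ := 2 * (M' t₀) ^ (1 - r / 2) / (C * (r - 2)) with hB
  have hX : 0 < (M' t₀) ^ (1 - r / 2) := Real.rpow_pos_of_pos hM'0 _
  have hBpos : 0 < B := by
    rw [hB]; positivity
  set t₁ : ℝ := t₀ + B with ht₁
  have ht₁T : t₁ < T := hT
  have hsub : Set.Icc t₀ t₁ ⊆ Set.Ico t₀ T := fun x hx => ⟨hx.1, lt_of_le_of_lt hx.2 ht₁T⟩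
  have hcontM' : ContinuousOn M' (Set.Icc t₀ t₁) := fun x hx =>
    ((hM' x (hsub hx)).continuousAt).continuousWithinAt
  -- Step 1: M' is positive on [t₀, t₁]
  have hpos : ∀ x ∈ Set.Icc t₀ t₁, 0 < M' x := by
    by_contra h
    push_neg at h
    obtain ⟨x₀, hx₀, hx₀le⟩ := h
    set S := Set.Icc t₀ t₁ ∩ M' ⁻¹' Set.Iic 0 with hS
    have hSne : S.Nonempty := ⟨x₀, hx₀, hx₀le⟩
    have hSbdd : BddBelow S := ⟨t₀, fun y hy => hy.1.1⟩
    have hSclosed : IsClosed S :=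
      hcontM'.preimage_isClosed_of_isClosed isClosed_Icc isClosed_Iic
    set τ := sInf S with hτ
    have hτS : τ ∈ S := hSclosed.csInf_mem hSne hSbdd
    have hτIcc : τ ∈ Set.Icc t₀ t₁ := hτS.1
    have hτle : M' τ ≤ 0 := hτS.2
    have hτgt : t₀ < τ := by
      rcases lt_or_eq_of_le hτIcc.1 with h | h
      · exact h
      · exfalso; rw [← h] at hτle; linarith
    have hforall : ∀ s ∈ Set.Ico t₀ τ, 0 < M' s := by
      intro s hs
      by_contra hns
      push_neg at hns
      have hsS : s ∈ S := ⟨⟨hs.1, hs.2.le.trans hτIcc.2⟩, hns⟩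
      exact absurd (csInf_le hSbdd hsS) (not_le.2 hs.2)
    have hmono : MonotoneOn M' (Set.Icc t₀ τ) := by
      apply monotoneOn_of_deriv_nonneg (convex_Icc _ _)
      · exact hcontM'.mono (Set.Icc_subset_Icc le_rfl hτIcc.2)
      · intro x hx
        rw [interior_Icc] at hx
        exact ((hM' x (hsub ⟨hx.1.le, hx.2.le.trans hτIcc.2⟩)).differentiableAt).differentiableWithinAt
      · intro x hx
        rw [interior_Icc] at hx
        have hxI : x ∈ Set.Ico t₀ T := hsub ⟨hx.1.le, hx.2.le.trans hτIcc.2⟩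
        rw [(hM' x hxI).deriv]
        have h1 := hineq x hxI
        have h2 : 0 < (M' x) ^ (r / 2) :=
          Real.rpow_pos_of_pos (hforall x ⟨hx.1.le, hx.2⟩) _
        nlinarith
    have : M' t₀ ≤ M' τ := hmono ⟨le_rfl, hτIcc.1⟩ ⟨hτIcc.1, le_rfl⟩ hτIcc.1
    linarith
  -- Step 2: the function ψ is antitone on [t₀, t₁]
  set K : ℝ := C * (r - 2) / 2 with hK
  set ψ : ℝ → ℝ := fun t => (M' t) ^ c + K * (t - t₀) with hψ
  have hψderiv : ∀ x ∈ Set.Ioo t₀ t₁,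
      HasDerivAt ψ (M'' x * c * (M' x) ^ (c - 1) + K) x := by
    intro x hx
    have hxI : x ∈ Set.Ico t₀ T := hsub ⟨hx.1.le, hx.2.le⟩
    have h1 : HasDerivAt (fun t => (M' t) ^ c) (M'' x * c * (M' x) ^ (c - 1)) x :=
      (hM' x hxI).rpow_const (Or.inl (hpos x ⟨hx.1.le, hx.2.le⟩).ne')
    have h2 : HasDerivAt (fun t => K * (t - t₀)) K x := by
      simpa using ((hasDerivAt_id x).sub_const t₀).const_mul K
    exact h1.add h2
  have hanti : AntitoneOn ψ (Set.Icc t₀ t₁) := by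
    apply antitoneOn_of_deriv_nonpos (convex_Icc _ _)
    · apply ContinuousOn.add
      · exact hcontM'.rpow_const (fun x hx => Or.inl (hpos x hx).ne')
      · exact (continuous_const.mul (continuous_id.sub continuous_const)).continuousOn
    · intro x hx
      rw [interior_Icc] at hx
      exact (hψderiv x hx).differentiableAt.differentiableWithinAt
    · intro x hx
      rw [interior_Icc] at hx
      rw [(hψderiv x hx).deriv]
      have hxI : x ∈ Set.Ico t₀ T := hsub ⟨hx.1.le, hx.2.le⟩
      have hN : 0 < M' x := hpos x ⟨hx.1.le, hx.2.le⟩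
      have h1 := hineq x hxI
      have hprod : (M' x) ^ (r / 2) * (M' x) ^ (c - 1) = 1 := by
        rw [← Real.rpow_add hN]
        norm_num [hc]
      have hNc : 0 < (M' x) ^ (c - 1) := Real.rpow_pos_of_pos hN _
      have hnp : c * (M' x) ^ (c - 1) ≤ 0 := by
        exact mul_nonpos_of_nonpos_of_nonneg hcneg.le hNc.le
      -- M'' x * c * N^(c-1) ≤ C * N^(r/2) * c * N^(c-1) = c * C
      have h2 := mul_le_mul_of_nonpos_right h1 hnp
      have heq : C * M' x ^ (r / 2) * (c * M' x ^ (c - 1)) = C * c := by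
        linear_combination C * c * hprod
      have hKc : C * c + K = 0 := by rw [hc, hK]; ring
      have hassoc : M'' x * (c * M' x ^ (c - 1)) = M'' x * c * M' x ^ (c - 1) := by ring
      have h3 : M'' x * c * M' x ^ (c - 1) ≤ C * c := by
        rw [← hassoc]; exact h2.trans_eq heq
      clear_value c K
      linarith
  have key : ψ t₁ ≤ ψ t₀ :=
    hanti ⟨le_rfl, by linarith⟩ ⟨by linarith, le_rfl⟩ (by linarith)
  have hφ1 : 0 < (M' t₁) ^ c := Real.rpow_pos_of_pos (hpos t₁ ⟨by linarith, le_rfl⟩) c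
  have hKB : K * (t₁ - t₀) = (M' t₀) ^ c := by
    have : t₁ - t₀ = B := by rw [ht₁]; ring
    rw [this, hB, hK, hc]
    have hr2 : r - 2 ≠ 0 := by linarith
    field_simp
  simp only [hψ] at key
  rw [hKB] at key
  simp only [sub_self, mul_zero, add_zero] at key
  linarith
end
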